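/- Let F be a CNF formula with an interval ordering, and consider the linear branch decomposition of F given by this linear order of cla(F) ∪ var(F). Then every cut of this decomposition has MIM-value at most 1 in I(F): for every prefix P of the ordering, the bipartite graph of incidence edges between P and its complement has no induced matching of size 2. -/

import Mathlib

/-- A clause is a finite set of literals; a literal is a variable paired with a polarity. -/
def occursIn {V : Type*} (x : V) (C : Finset (V × Bool)) : Prop := ∃ b, (x, b) ∈ C

/-- An assignment `τ` satisfies the clause `C` restricted to the variable set `X`. -/
def satisfiesOn {V : Type*} (τ : V → Bool) (C : Finset (V × Bool)) (X : Set V) : Prop :=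
  ∃ l ∈ C, l.1 ∈ X ∧ τ l.1 = l.2

/-- The set of (indices of) clauses of the subformula `F_{D,X}` satisfied by `τ`. -/
def satA {V ι : Type*} (F : ι → Finset (V × Bool)) (τ : V → Bool) (D : Set ι) (X : Set V) :
    Set ι := {i | i ∈ D ∧ satisfiesOn τ (F i) X}

/-- Precisely satisfiable clause-sets of the subformula `F_{D,X}`. -/
def PSA {V ι : Type*} (F : ι → Finset (V × Bool)) (D : Set ι) (X : Set V) : Set (Set ι) :=
  {s | ∃ τ : V → Bool, satA F τ D X = s}

/-- Clauses of `F` satisfied by the complete assignment `τ`. -/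
def satF {V ι : Type*} (F : ι → Finset (V × Bool)) (τ : V → Bool) : Set ι :=
  satA F τ Set.univ Set.univ

/-- The family of precisely satisfiable clause-sets of `F`. -/
def PS {V ι : Type*} (F : ι → Finset (V × Bool)) : Set (Set ι) := PSA F Set.univ Set.univ

/-- The incidence graph of a CNF formula. -/
def incidence {V ι : Type*} (F : ι → Finset (V × Bool)) : SimpleGraph (ι ⊕ V) where
  Adj a b := (∃ i x, a = Sum.inl i ∧ b = Sum.inr x ∧ occursIn x (F i)) ∨
             (∃ i x, b = Sum.inl i ∧ a = Sum.inr x ∧ occursIn x (F i))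
  symm := by
    constructor
    rintro a b (⟨i, x, h1, h2, h3⟩ | ⟨i, x, h1, h2, h3⟩)
    · exact Or.inr ⟨i, x, h1, h2, h3⟩
    · exact Or.inl ⟨i, x, h1, h2, h3⟩
  loopless := by constructor; rintro a (⟨i, x, h1, h2, _⟩ | ⟨i, x, h1, h2, _⟩) <;> simp_all

/-- The bigraph bipartization `G[A, Ā]`: keep only edges with exactly one endpoint in `A`. -/
def bipartize {α : Type*} (G : SimpleGraph α) (A : Set α) : SimpleGraph α where
  Adj a b := G.Adj a b ∧ ((a ∈ A ∧ b ∉ A) ∨ (b ∈ A ∧ a ∉ A))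
  symm := by constructor; intro a b h; exact ⟨h.1.symm, h.2.symm⟩
  loopless := by constructor; intro a h; exact G.loopless.irrefl a h.1

/-- `M` is an induced matching of the graph `G` (edges recorded as ordered pairs). -/
def IsIM {α : Type*} (G : SimpleGraph α) (M : Finset (α × α)) : Prop :=
  (∀ p ∈ M, G.Adj p.1 p.2) ∧
  ∀ p ∈ M, ∀ q ∈ M, p ≠ q →
    p.1 ≠ q.1 ∧ p.1 ≠ q.2 ∧ p.2 ≠ q.1 ∧ p.2 ≠ q.2 ∧
    ¬ G.Adj p.1 q.1 ∧ ¬ G.Adj p.1 q.2 ∧ ¬ G.Adj p.2 q.1 ∧ ¬ G.Adj p.2 q.2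

/-- Rooted binary trees with leaves labelled by `α`. -/
inductive BTree (α : Type u) : Type u
  | leaf : α → BTree α
  | node : BTree α → BTree α → BTree α

namespace BTree

def leaves {α : Type*} : BTree α → List α
  | leaf a => [a]
  | node l r => l.leaves ++ r.leaves

/-- The cuts of a branch decomposition: for every node of the tree, the set of labels of
leaves below it. -/
def cuts {α : Type*} : BTree α → List (Set α)
  | leaf a => [{a}]
  | node l r => {a | a ∈ l.leaves ∨ a ∈ r.leaves} :: (l.cuts ++ r.cuts)

def map {α β : Type*} (f : α → β) : BTree α → BTree β
  | leaf a => leaf (f a)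
  | node l r => node (l.map f) (r.map f)

end BTree

/-- `T` is a branch decomposition of the whole type `α`: its leaves are in bijection with `α`. -/
def IsBD {α : Type*} (T : BTree α) : Prop := T.leaves.Nodup ∧ ∀ a : α, a ∈ T.leaves

/-- The `ps`-value of a cut `S ⊆ cla(F) ⊕ var(F)` of the formula `F`. -/
noncomputable def psVal {V ι : Type*} (F : ι → Finset (V × Bool)) (S : Set (ι ⊕ V)) : ℕ :=
  max (PSA F {i | Sum.inl i ∉ S} {x | Sum.inr x ∈ S}).ncard
      (PSA F {i | Sum.inl i ∈ S} {x | Sum.inr x ∉ S}).ncard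

/-- The `ps`-width of the formula `F`. -/
noncomputable def psw {V ι : Type*} (F : ι → Finset (V × Bool)) : ℕ :=
  sInf {k | ∃ T : BTree (ι ⊕ V), IsBD T ∧ ∀ S ∈ T.cuts, psVal F S ≤ k}

/-- The MIM-width of a graph. -/
noncomputable def mimw {α : Type*} (G : SimpleGraph α) : ℕ :=
  sInf {k | ∃ T : BTree α, IsBD T ∧
    ∀ S ∈ T.cuts, ∀ M : Finset (α × α), IsIM (bipartize G S) M → M.card ≤ k}

/-- for a formula with an interval ordering, every prefix cut of the corresponding
linear branch decomposition has no induced matching of size 2 in the cut graph. -/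
theorem stmt14 {V ι : Type*} (F : ι → Finset (V × Bool)) (ord : ι ⊕ V → ℕ)
    (hinj : Function.Injective ord)
    (h1 : ∀ (x : V) (i : ι), occursIn x (F i) → ord (Sum.inr x) < ord (Sum.inl i) →
      ∀ y : V, ord (Sum.inr x) < ord (Sum.inr y) → ord (Sum.inr y) < ord (Sum.inl i) →
        occursIn y (F i))
    (h2 : ∀ (x : V) (i : ι), occursIn x (F i) → ord (Sum.inl i) < ord (Sum.inr x) →
      ∀ j : ι, ord (Sum.inl i) < ord (Sum.inl j) → ord (Sum.inl j) < ord (Sum.inr x) →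
        occursIn x (F j))
    (P : Set (ι ⊕ V)) (hP : ∀ a b : ι ⊕ V, ord a ≤ ord b → b ∈ P → a ∈ P) :
    ¬ ∃ (i1 i2 : ι) (x1 x2 : V),
      occursIn x1 (F i1) ∧ occursIn x2 (F i2) ∧
      ¬ occursIn x1 (F i2) ∧ ¬ occursIn x2 (F i1) ∧
      (((Sum.inl i1 : ι ⊕ V) ∈ P ∧ (Sum.inr x1 : ι ⊕ V) ∉ P) ∨
        ((Sum.inr x1 : ι ⊕ V) ∈ P ∧ (Sum.inl i1 : ι ⊕ V) ∉ P)) ∧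
      (((Sum.inl i2 : ι ⊕ V) ∈ P ∧ (Sum.inr x2 : ι ⊕ V) ∉ P) ∨
        ((Sum.inr x2 : ι ⊕ V) ∈ P ∧ (Sum.inl i2 : ι ⊕ V) ∉ P)) := by
  rintro ⟨i1, i2, x1, x2, o1, o2, n1, n2, e1, e2⟩
  have key : ∀ a b : ι ⊕ V, a ∈ P → b ∉ P → ord a < ord b := by
    intro a b ha hb
    by_contra h
    exact hb (hP b a (le_of_not_gt h) ha)
  have ne12 : i1 ≠ i2 := fun h => n1 (h ▸ o1)
  have nex : x1 ≠ x2 := fun h => n1 (by rw [h]; exact o2)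
  rcases e1 with ⟨hi1, hx1⟩ | ⟨hx1, hi1⟩ <;> rcases e2 with ⟨hi2, hx2⟩ | ⟨hx2, hi2⟩
  · have hne : ord (Sum.inl i1 : ι ⊕ V) ≠ ord (Sum.inl i2) := fun h =>
      ne12 (Sum.inl.inj (hinj h))
    rcases hne.lt_or_gt with h | h
    · exact n1 (h2 x1 i1 o1 (key _ _ hi1 hx1) i2 h (key _ _ hi2 hx1))
    · exact n2 (h2 x2 i2 o2 (key _ _ hi2 hx2) i1 h (key _ _ hi1 hx2))
  · have hne : ord (Sum.inr x1 : ι ⊕ V) ≠ ord (Sum.inl i2) := fun h => by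
      cases hinj h
    rcases hne.lt_or_gt with h | h
    · exact n1 (h1 x2 i2 o2 (key _ _ hx2 hi2) x1 (key _ _ hx2 hx1) h)
    · exact n1 (h2 x1 i1 o1 (key _ _ hi1 hx1) i2 (key _ _ hi1 hi2) h)
  · have hne : ord (Sum.inr x2 : ι ⊕ V) ≠ ord (Sum.inl i1) := fun h => by
      cases hinj h
    rcases hne.lt_or_gt with h | h
    · exact n2 (h1 x1 i1 o1 (key _ _ hx1 hi1) x2 (key _ _ hx1 hx2) h)
    · exact n2 (h2 x2 i2 o2 (key _ _ hi2 hx2) i1 (key _ _ hi2 hi1) h)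
  · have hne : ord (Sum.inr x1 : ι ⊕ V) ≠ ord (Sum.inr x2) := fun h =>
      nex (Sum.inr.inj (hinj h))
    rcases hne.lt_or_gt with h | h
    · exact n2 (h1 x1 i1 o1 (key _ _ hx1 hi1) x2 h (key _ _ hx2 hi1))
    · exact n1 (h1 x2 i2 o2 (key _ _ hx2 hi2) x1 h (key _ _ hx1 hi2))
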